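/- Symmetry of extremal gaps: for two solutions of the system, the quantities A := max_l max_{x∈V}(û^l(x) - v̂^l(x)) and B := max_l max_{x∈V}(v̂^l(x) - û^l(x)) satisfy: A > 0 if and only if B > 0, and in that case A = B. -/

import Mathlib

open Finset

noncomputable def nbrAvg {V : Type*} [Fintype V] (G : SimpleGraph V) [DecidableRel G.Adj]
    (u : V → ℝ) (x : V) : ℝ :=
  (∑ y ∈ G.neighborFinset x, u y) / (G.degree x)

def hatFn {V : Type*} {m : ℕ} (u : Fin m → V → ℝ) (l : Fin m) (x : V) : ℝ :=
  u l x - ∑ p ∈ Finset.univ.erase l, u p x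

/-- `u` is a (nonnegative) solution of the discrete system with boundary set `Bd`,
nonlinearities `H`, `f`, and boundary data `φ`. -/
def IsSol {V : Type*} {m : ℕ} [Fintype V] (G : SimpleGraph V) [DecidableRel G.Adj]
    (Bd : Set V) (H : V → ℝ → ℝ) (f : Fin m → V → ℝ → ℝ) (φ : Fin m → V → ℝ)
    (u : Fin m → V → ℝ) : Prop :=
  (∀ l x, 0 ≤ u l x) ∧
  (∀ l x, x ∉ Bd → u l x =
      max (H x (nbrAvg G (u l) x - ∑ p ∈ Finset.univ.erase l, nbrAvg G (u p) x)
           - f l x (u l x)) 0) ∧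
  (∀ l x, x ∈ Bd → u l x = φ l x)

lemma nbrAvg_nonneg {V : Type*} [Fintype V] (G : SimpleGraph V) [DecidableRel G.Adj]
    {u : V → ℝ} (hu : ∀ y, 0 ≤ u y) (x : V) : 0 ≤ nbrAvg G u x :=
  div_nonneg (Finset.sum_nonneg fun y _ => hu y) (Nat.cast_nonneg _)

lemma sol_pos_drift {V : Type*} {m : ℕ} [Fintype V] (G : SimpleGraph V) [DecidableRel G.Adj]
    (Bd : Set V) (H : V → ℝ → ℝ) (f : Fin m → V → ℝ → ℝ) (φ : Fin m → V → ℝ)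
    (hHmono : ∀ x : V, Monotone (H x)) (hH0 : ∀ x, H x 0 = 0)
    (hfmono : ∀ l x, Monotone (f l x)) (hf0 : ∀ l x, f l x 0 = 0)
    {u : Fin m → V → ℝ} (hu : IsSol G Bd H f φ u) {l : Fin m} {x : V}
    (hx : x ∉ Bd) (hpos : 0 < u l x) :
    0 < nbrAvg G (u l) x - ∑ p ∈ Finset.univ.erase l, nbrAvg G (u p) x := by
  have heq := hu.2.1 l x hx
  set t := nbrAvg G (u l) x - ∑ p ∈ Finset.univ.erase l, nbrAvg G (u p) x with ht
  have hf : 0 ≤ f l x (u l x) := by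
    have := hfmono l x (le_of_lt hpos)
    rw [hf0 l x] at this; exact this
  have hHpos : 0 < H x t := by
    rcases le_or_gt (H x t - f l x (u l x)) 0 with h | h
    · rw [max_eq_right h] at heq; linarith
    · rw [max_eq_left (le_of_lt h)] at heq; linarith
  by_contra hle
  push_neg at hle
  have := hHmono x hle
  rw [hH0 x] at this
  linarith

/-- Segregation: at each point at most one component of a solution is positive. -/
lemma sol_segregated {V : Type*} {m : ℕ} [Fintype V] (G : SimpleGraph V) [DecidableRel G.Adj]
    (Bd : Set V) (H : V → ℝ → ℝ) (f : Fin m → V → ℝ → ℝ) (φ : Fin m → V → ℝ)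
    (hHmono : ∀ x : V, Monotone (H x)) (hH0 : ∀ x, H x 0 = 0)
    (hfmono : ∀ l x, Monotone (f l x)) (hf0 : ∀ l x, f l x 0 = 0)
    (hφ : ∀ i j : Fin m, i ≠ j → ∀ x, φ i x * φ j x = 0)
    {u : Fin m → V → ℝ} (hu : IsSol G Bd H f φ u) (x : V) {l p : Fin m} (hlp : l ≠ p) :
    u l x = 0 ∨ u p x = 0 := by
  by_cases hx : x ∈ Bd
  · rw [hu.2.2 l x hx, hu.2.2 p x hx]
    exact mul_eq_zero.mp (hφ l p hlp x)
  · by_contra hcon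
    push_neg at hcon
    have hl : 0 < u l x := lt_of_le_of_ne (hu.1 l x) (Ne.symm hcon.1)
    have hp : 0 < u p x := lt_of_le_of_ne (hu.1 p x) (Ne.symm hcon.2)
    have h1 := sol_pos_drift G Bd H f φ hHmono hH0 hfmono hf0 hu hx hl
    have h2 := sol_pos_drift G Bd H f φ hHmono hH0 hfmono hf0 hu hx hp
    set a : Fin m → ℝ := fun q => nbrAvg G (u q) x with ha
    have hann : ∀ q, 0 ≤ a q := fun q => nbrAvg_nonneg G (fun y => hu.1 q y) x
    have hsl : a l + ∑ q ∈ Finset.univ.erase l, a q = ∑ q, a q :=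
      Finset.add_sum_erase _ a (Finset.mem_univ l)
    have hsp : a p + ∑ q ∈ Finset.univ.erase p, a q = ∑ q, a q :=
      Finset.add_sum_erase _ a (Finset.mem_univ p)
    have hple : a p ≤ ∑ q ∈ Finset.univ.erase l, a q :=
      Finset.single_le_sum (fun q _ => hann q)
        (Finset.mem_erase.mpr ⟨Ne.symm hlp, Finset.mem_univ p⟩)
    linarith

lemma hatFn_eq {V : Type*} {m : ℕ} [Fintype V] (u : Fin m → V → ℝ) (l : Fin m) (x : V) :
    hatFn u l x = 2 * u l x - ∑ q, u q x := by
  have h : u l x + ∑ q ∈ Finset.univ.erase l, u q x = ∑ q, u q x :=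
    Finset.add_sum_erase _ (fun q => u q x) (Finset.mem_univ l)
  unfold hatFn
  linarith

/-- Key pointwise swap: if `v` is segregated at `x` and both are nonnegative,
each gap value is dominated by a reverse gap value at the same point. -/
lemma key_swap {V : Type*} {m : ℕ} [Fintype V] (hm : 2 ≤ m)
    (u v : Fin m → V → ℝ) (hun : ∀ l x, 0 ≤ u l x) (hvn : ∀ l x, 0 ≤ v l x)
    (x : V) (hseg : ∀ l p : Fin m, l ≠ p → v l x = 0 ∨ v p x = 0) (l : Fin m) :
    ∃ l' : Fin m, hatFn u l x - hatFn v l x ≤ hatFn v l' x - hatFn u l' x := by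
  -- find j such that v q x = 0 for all q ≠ j
  have hcard : 1 < Fintype.card (Fin m) := by rw [Fintype.card_fin]; omega
  have hj : ∃ j : Fin m, ∀ q : Fin m, q ≠ j → v q x = 0 := by
    by_cases hall : ∀ q : Fin m, v q x = 0
    · exact ⟨l, fun q _ => hall q⟩
    · push_neg at hall
      obtain ⟨j, hjne⟩ := hall
      refine ⟨j, fun q hq => ?_⟩
      rcases hseg q j hq with h | h
      · exact h
      · exact absurd h hjne
  obtain ⟨j, hj⟩ := hj
  -- choose l' ≠ l with v supported on {l, l'}
  obtain ⟨l', hl'l, hl'⟩ : ∃ l' : Fin m, l' ≠ l ∧ ∀ q : Fin m, q ≠ l → q ≠ l' → v q x = 0 := by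
    by_cases hjl : j = l
    · obtain ⟨l', hl'⟩ := Fintype.exists_ne_of_one_lt_card hcard l
      exact ⟨l', hl', fun q hq _ => hj q (hjl ▸ hq)⟩
    · exact ⟨j, hjl, fun q _ hq => hj q hq⟩
  refine ⟨l', ?_⟩
  rw [hatFn_eq, hatFn_eq, hatFn_eq, hatFn_eq]
  -- sums
  have husum : u l x + u l' x ≤ ∑ q, u q x := by
    have h1 : u l x + ∑ q ∈ Finset.univ.erase l, u q x = ∑ q, u q x :=
      Finset.add_sum_erase _ (fun q => u q x) (Finset.mem_univ l)
    have h2 : u l' x ≤ ∑ q ∈ Finset.univ.erase l, u q x :=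
      Finset.single_le_sum (fun q _ => hun q x)
        (Finset.mem_erase.mpr ⟨hl'l, Finset.mem_univ l'⟩)
    linarith
  have hvsum : ∑ q, v q x = v l x + v l' x := by
    have h1 : v l x + ∑ q ∈ Finset.univ.erase l, v q x = ∑ q, v q x :=
      Finset.add_sum_erase _ (fun q => v q x) (Finset.mem_univ l)
    have h2 : ∑ q ∈ Finset.univ.erase l, v q x = v l' x := by
      refine Finset.sum_eq_single_of_mem l'
        (Finset.mem_erase.mpr ⟨hl'l, Finset.mem_univ l'⟩) ?_
      intro q hq hql'
      exact hl' q (Finset.mem_erase.mp hq).1 hql'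
    linarith
  linarith

theorem gap_symmetry {V : Type*} {m : ℕ} [Fintype V] (G : SimpleGraph V) [DecidableRel G.Adj]
    (Bd : Set V) (H : V → ℝ → ℝ) (f : Fin m → V → ℝ → ℝ) (φ : Fin m → V → ℝ)
    (hconn : G.Connected) (hBd : Bd.Nonempty)
    (hHmono : ∀ x : V, Monotone (H x)) (hH0 : ∀ x, H x 0 = 0)
    (hHodd : ∀ x s, H x (-s) = -H x s)
    (hfmono : ∀ l x, Monotone (f l x)) (hf0 : ∀ l x, f l x 0 = 0)
    (hfodd : ∀ l x s, f l x (-s) = -f l x s)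
    (hφ : ∀ i j : Fin m, i ≠ j → ∀ x, φ i x * φ j x = 0)
    (hφnn : ∀ l x, 0 ≤ φ l x)
    (hHlip : ∀ x s t, |H x s - H x t| ≤ |s - t|) (hm : 2 ≤ m)
    (u v : Fin m → V → ℝ) (hu : IsSol G Bd H f φ u) (hv : IsSol G Bd H f φ v)
    (A B : ℝ)
    (hA : IsGreatest {a : ℝ | ∃ (l : Fin m) (x : V), a = hatFn u l x - hatFn v l x} A)
    (hB : IsGreatest {b : ℝ | ∃ (l : Fin m) (x : V), b = hatFn v l x - hatFn u l x} B) :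
    (0 < A ↔ 0 < B) ∧ (0 < A → A = B) := by
  have hAB : A ≤ B := by
    obtain ⟨l, x, hAeq⟩ := hA.1
    obtain ⟨l', hle⟩ := key_swap hm u v hu.1 hv.1 x
      (fun a b hab => sol_segregated G Bd H f φ hHmono hH0 hfmono hf0 hφ hv x hab) l
    calc A = hatFn u l x - hatFn v l x := hAeq
      _ ≤ hatFn v l' x - hatFn u l' x := hle
      _ ≤ B := hB.2 ⟨l', x, rfl⟩
  have hBA : B ≤ A := by
    obtain ⟨l, x, hBeq⟩ := hB.1
    obtain ⟨l', hle⟩ := key_swap hm v u hv.1 hu.1 x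
      (fun a b hab => sol_segregated G Bd H f φ hHmono hH0 hfmono hf0 hφ hu x hab) l
    calc B = hatFn v l x - hatFn u l x := hBeq
      _ ≤ hatFn u l' x - hatFn v l' x := hle
      _ ≤ A := hA.2 ⟨l', x, rfl⟩
  have hEq : A = B := le_antisymm hAB hBA
  exact ⟨by rw [hEq], fun _ => hEq⟩
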